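/- (Lemma 2.3) For each n ≥ 0, the set ∂_n is finite and ∏_{i=1}^d (h_i(n) + 1) ≤ |∂_n| ≤ (d+1) ∏_{i=1}^d (h_i(n) + 1). -/

import Mathlib

open scoped ENNReal BigOperators

namespace WedgePaper

/-- A point of `ℤ^{d+1}`, written as (x₁,…,x_d, x_{d+1}). -/
abbrev Pt (d : ℕ) := (Fin d → ℤ) × ℤ

/-- The vertex set `V` of `Wedge(f₁,…,f_d)`:
points `(x₁,…,x_d,n) ∈ ℤ^{d+1}` with `n ≥ 0` and `0 ≤ xᵢ ≤ fᵢ(n)`. -/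
def V (d : ℕ) (f : Fin d → ℕ → ℝ≥0∞) : Set (Pt d) :=
  {x | 0 ≤ x.2 ∧ ∀ i, 0 ≤ x.1 i ∧ ((x.1 i).toNat : ℝ≥0∞) ≤ f i x.2.toNat}

/-- The ℓ¹ distance on `ℤ^{d+1}`. -/
def dist1 (d : ℕ) (x y : Pt d) : ℤ :=
  (∑ i : Fin d, |x.1 i - y.1 i|) + |x.2 - y.2|

/-- The edge relation of `Wedge(f₁,…,f_d)`. -/
def Edge (d : ℕ) (f : Fin d → ℕ → ℝ≥0∞) (x y : Pt d) : Prop :=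
  x ∈ V d f ∧ y ∈ V d f ∧ dist1 d x y = 1

/-- `pfun d h x i = pᵢ(x) = min{m : hᵢ(m) ≥ xᵢ}`. -/
noncomputable def pfun (d : ℕ) (h : Fin d → ℕ → ℕ) (x : Pt d) (i : Fin d) : ℕ :=
  sInf {m : ℕ | x.1 i ≤ (h i m : ℤ)}

/-- `ufun d h x = u(x) = max{x_{d+1}, p₁(x),…,p_d(x)}`. -/
noncomputable def ufun (d : ℕ) (h : Fin d → ℕ → ℕ) (x : Pt d) : ℕ :=
  max x.2.toNat (Finset.univ.sup (pfun d h x))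

/-- `Δ_{d+1}(n)`. -/
def DeltaTop (d : ℕ) (h : Fin d → ℕ → ℕ) : ℕ → Set (Pt d)
  | 0 => {0}
  | (n+1) => {x | x.2 = ((n : ℤ) + 1) ∧ ∀ i, 0 ≤ x.1 i ∧ x.1 i ≤ (h i (n+1) : ℤ)}

/-- `Δᵢ(n)` for `1 ≤ i ≤ d` (empty when `hᵢ(n) = hᵢ(n-1)`). -/
def DeltaSide (d : ℕ) (f : Fin d → ℕ → ℝ≥0∞) (h : Fin d → ℕ → ℕ) (i : Fin d) :
    ℕ → Set (Pt d)
  | 0 => {0}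
  | (n+1) => {x | h i (n+1) = h i n + 1 ∧ x ∈ V d f ∧
      (∀ j, x.1 j ≤ (h j (n+1) : ℤ)) ∧ x.1 i = (h i (n+1) : ℤ) ∧ x.2 ≤ (n : ℤ) + 1}

/-- `∂_n = ⋃_{i=1}^{d+1} Δᵢ(n)`. -/
def bdry (d : ℕ) (f : Fin d → ℕ → ℝ≥0∞) (h : Fin d → ℕ → ℕ) (n : ℕ) : Set (Pt d) :=
  DeltaTop d h n ∪ ⋃ i, DeltaSide d f h i n

/-- `x + eᵢ`, where `eᵢ` is the i-th standard unit vector of `ℤ^{d+1}`. -/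
def addE (d : ℕ) (x : Pt d) (i : Fin (d+1)) : Pt d :=
  if hi : (i : ℕ) < d then (Function.update x.1 ⟨i, hi⟩ (x.1 ⟨i, hi⟩ + 1), x.2)
  else (x.1, x.2 + 1)

/-- A flow on `Wedge(f₁,…,f_d)`: an antisymmetric function vanishing off edges. -/
def IsFlow (d : ℕ) (f : Fin d → ℕ → ℝ≥0∞) (θ : Pt d → Pt d → ℝ) : Prop :=
  (∀ v w, θ v w = - θ w v) ∧ ∀ v w, ¬ Edge d f v w → θ v w = 0

/-- Divergence of `θ` at `v`: `∑_w θ(v,w)`. -/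
noncomputable def divg (d : ℕ) (θ : Pt d → Pt d → ℝ) (v : Pt d) : ℝ := ∑' w, θ v w

/-- Energy of a flow: `(1/2) ∑_{v,w} θ(v,w)²`. -/
noncomputable def energy (d : ℕ) (θ : Pt d → Pt d → ℝ) : ℝ≥0∞ :=
  (1/2 : ℝ≥0∞) * ∑' q : Pt d × Pt d, ENNReal.ofReal (θ q.1 q.2 ^ 2)

/-- A unit flow from the vertex `a` to the set `B`. -/
def IsUnitFlow (d : ℕ) (f : Fin d → ℕ → ℝ≥0∞) (a : Pt d) (B : Set (Pt d))
    (θ : Pt d → Pt d → ℝ) : Prop :=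
  IsFlow d f θ ∧ divg d θ a = 1 ∧ ∀ v, v ∉ B ∪ {a} → divg d θ v = 0

/-- The set `V_x` built from the functions `g_{±i}` (here `gp i = g_i`, `gm i = g_{-i}`). -/
def Vx (d : ℕ) (gp gm : Fin d → ℕ → ℤ) (r s : ℕ) : Set (Pt d) :=
  {y | ∃ n : ℕ, n ≤ r - s ∧ y.2 = (n : ℤ) + (s : ℤ) ∧
    ∀ i, gm i n ≤ y.1 i ∧ y.1 i ≤ gp i n}

/-- `Lᵢ(n) = min{g_{εi}(n) : g_{εi}(n) = g_{εi}(n-1), ε ∈ {-1,1}}` (for `n ≥ 1`). -/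
def Lfun (d : ℕ) (gp gm : Fin d → ℕ → ℤ) (i : Fin d) (n : ℕ) : ℤ :=
  if gm i n = gm i (n-1) then gm i n else gp i n

/-- The map `Γ`. -/
def Gam (d : ℕ) (gp gm : Fin d → ℕ → ℤ) (s : ℕ) (y : Pt d) : Pt d :=
  if y.2 = (s : ℤ) then 0
  else (fun i => |y.1 i - Lfun d gp gm i (y.2 - (s : ℤ)).toNat|, y.2 - (s : ℤ))

/-- The set `H`, a piece of `Wedge(h₁,…,h_d)`. -/
def Hset (d : ℕ) (h : Fin d → ℕ → ℕ) (r s : ℕ) : Set (Pt d) :=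
  {y | ∃ n : ℕ, n ≤ r - s ∧ y.2 = (n : ℤ) ∧ ∀ i, 0 ≤ y.1 i ∧ y.1 i ≤ (h i n : ℤ)}

lemma aux_ncard_biUnion_le {ι α : Type*} [DecidableEq ι] (s : Finset ι) (t : ι → Set α) :
    (⋃ i ∈ s, t i).ncard ≤ ∑ i ∈ s, (t i).ncard := by
  induction s using Finset.induction with
  | empty => simp
  | insert _ _ hm ih =>
    rename_i a s
    rw [Finset.set_biUnion_insert, Finset.sum_insert hm]
    exact (Set.ncard_union_le _ _).trans (Nat.add_le_add_left ih _)

lemma aux_hmono (d : ℕ) (f : Fin d → ℕ → ℝ≥0∞) (h : Fin d → ℕ → ℕ)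
    (hrec : ∀ (i : Fin d) (n : ℕ),
      ((h i n : ℝ≥0∞) + 1 ≤ f i (n + 1) ∧ h i (n + 1) = h i n + 1) ∨
      (¬ ((h i n : ℝ≥0∞) + 1 ≤ f i (n + 1)) ∧ h i (n + 1) = h i n)) (i : Fin d) :
    Monotone (h i) := by
  apply monotone_nat_of_le_succ
  intro n
  rcases hrec i n with ⟨_, e⟩ | ⟨_, e⟩ <;> omega

lemma aux_key (d : ℕ) (f : Fin d → ℕ → ℝ≥0∞) (hf : ∀ i, Monotone (f i))
    (h : Fin d → ℕ → ℕ)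
    (hrec : ∀ (i : Fin d) (n : ℕ),
      ((h i n : ℝ≥0∞) + 1 ≤ f i (n + 1) ∧ h i (n + 1) = h i n + 1) ∨
      (¬ ((h i n : ℝ≥0∞) + 1 ≤ f i (n + 1)) ∧ h i (n + 1) = h i n))
    (i : Fin d) (n : ℕ) (hstep : h i (n+1) = h i n + 1)
    (t : ℕ) (ht : t ≤ n+1) (hft : ((h i (n+1) : ℝ≥0∞)) ≤ f i t) :
    n + 1 ≤ h i (n+1) + t := by
  have claim : ∀ s, t ≤ s → s ≤ n+1 → h i t + s ≤ h i s + t := by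
    intro s
    induction s with
    | zero =>
      intro h1 _
      have ht0 : t = 0 := Nat.le_zero.mp h1
      subst ht0
      omega
    | succ s ih =>
      intro h1 h2
      rcases Nat.eq_or_lt_of_le h1 with rfl | h1'
      · omega
      · have hs : t ≤ s := by omega
        have hbelow : h i s + 1 ≤ h i (n+1) := by
          have := aux_hmono d f h hrec i (show s ≤ n by omega)
          omega
        have hstep2 : h i (s+1) = h i s + 1 := by
          rcases hrec i s with ⟨_, e⟩ | ⟨hc, e⟩
          · exact e
          · exfalso
            apply hc
            calc (h i s : ℝ≥0∞) + 1 ≤ (h i (n+1) : ℝ≥0∞) := by exact_mod_cast hbelow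
              _ ≤ f i t := hft
              _ ≤ f i (s+1) := hf i (by omega)
        have := ih hs (by omega)
        omega
  have := claim (n+1) ht le_rfl
  omega

/-- Lemma 2.3: ∂_n is finite and
∏ᵢ (hᵢ(n)+1) ≤ |∂_n| ≤ (d+1) ∏ᵢ (hᵢ(n)+1). -/
theorem stmt_7
    (d : ℕ) (hd : 1 ≤ d) (f : Fin d → ℕ → ℝ≥0∞) (hf : ∀ i, Monotone (f i))
    (h : Fin d → ℕ → ℕ) (h0 : ∀ i, h i 0 = 0)
    (hrec : ∀ (i : Fin d) (n : ℕ),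
      ((h i n : ℝ≥0∞) + 1 ≤ f i (n + 1) ∧ h i (n + 1) = h i n + 1) ∨
      (¬ ((h i n : ℝ≥0∞) + 1 ≤ f i (n + 1)) ∧ h i (n + 1) = h i n)) :
    ∀ n : ℕ, (bdry d f h n).Finite ∧
      (∏ i : Fin d, (h i n + 1)) ≤ (bdry d f h n).ncard ∧
      (bdry d f h n).ncard ≤ (d + 1) * ∏ i : Fin d, (h i n + 1) := by
  intro n
  cases n with
  | zero =>
    have hb : bdry d f h 0 = {(0 : Pt d)} := by
      apply Set.Subset.antisymm
      · apply Set.union_subset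
        · exact subset_rfl
        · exact Set.iUnion_subset fun i => subset_rfl
      · exact Set.subset_union_left
    rw [hb]
    refine ⟨Set.finite_singleton _, ?_, ?_⟩
    · rw [Set.ncard_singleton]
      simp [h0]
    · rw [Set.ncard_singleton]
      simp [h0]
  | succ n =>
    classical
    set P := ∏ i : Fin d, (h i (n+1) + 1) with hP
    set B : Finset (Pt d) :=
      (Fintype.piFinset fun i => Finset.Icc (0:ℤ) (h i (n+1))) ×ˢ {((n:ℤ)+1)} with hB
    have hBcard : B.card = P := by
      rw [hB, Finset.card_product, Fintype.card_piFinset]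
      have hIcc : ∀ i : Fin d, (Finset.Icc (0:ℤ) (h i (n+1))).card = h i (n+1) + 1 := by
        intro i
        rw [Int.card_Icc]
        omega
      simp [hIcc, hP]
    have hTop : DeltaTop d h (n+1) = ↑B := by
      ext x
      simp only [DeltaTop, Set.mem_setOf_eq, hB, Finset.coe_product,
        Finset.coe_singleton, Set.mem_prod, Set.mem_singleton_iff,
        Finset.mem_coe, Fintype.mem_piFinset, Finset.mem_Icc]
      tauto
    have hTopfin : (DeltaTop d h (n+1)).Finite := by
      rw [hTop]; exact B.finite_toSet
    have hTopcard : (DeltaTop d h (n+1)).ncard = P := by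
      rw [hTop, Set.ncard_coe_finset, hBcard]
    -- the injection for the side pieces
    have side : ∀ i : Fin d, (DeltaSide d f h i (n+1)).Finite ∧
        (DeltaSide d f h i (n+1)).ncard ≤ P := by
      intro i
      set φ : Pt d → Pt d :=
        fun x => (Function.update x.1 i ((n:ℤ)+1 - x.2), (n:ℤ)+1) with hφ
      have hmaps : ∀ x ∈ DeltaSide d f h i (n+1), φ x ∈ DeltaTop d h (n+1) := by
        intro x hx
        obtain ⟨hstep, hxV, hle, hxi, hx2⟩ := hx
        have hx2' : (0:ℤ) ≤ x.2 := hxV.1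
        have hfi : (h i (n+1) : ℝ≥0∞) ≤ f i x.2.toNat := by
          have h2 := (hxV.2 i).2
          rw [hxi] at h2
          simpa using h2
        have hkey := aux_key d f hf h hrec i n hstep x.2.toNat (by omega) hfi
        simp only [DeltaTop, Set.mem_setOf_eq, hφ]
        refine ⟨by trivial, fun j => ?_⟩
        by_cases hj : j = i
        · subst hj
          simp only [Function.update_self]
          constructor
          · omega
          · omega
        · simp only [Function.update_of_ne hj]
          exact ⟨(hxV.2 j).1, hle j⟩
      have hinj : Set.InjOn φ (DeltaSide d f h i (n+1)) := by
        intro x hx y hy hxy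
        obtain ⟨_, hxV, _, hxi, _⟩ := hx
        obtain ⟨_, hyV, _, hyi, _⟩ := hy
        have e1 := congrArg Prod.fst hxy
        have hi2 : (n:ℤ)+1 - x.2 = (n:ℤ)+1 - y.2 := by
          have := congrFun e1 i
          simpa [hφ, Function.update_self] using this
        have h2 : x.2 = y.2 := by omega
        have h1 : x.1 = y.1 := by
          funext j
          by_cases hj : j = i
          · subst hj; rw [hxi, hyi]
          · have := congrFun e1 j
            simpa [hφ, Function.update_of_ne hj] using this
        exact Prod.ext h1 h2
      have hfin : (DeltaSide d f h i (n+1)).Finite := by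
        apply Set.Finite.of_finite_image _ hinj
        exact hTopfin.subset (Set.image_subset_iff.mpr hmaps)
      exact ⟨hfin, hTopcard ▸ Set.ncard_le_ncard_of_injOn φ hmaps hinj hTopfin⟩
    have hbfin : (bdry d f h (n+1)).Finite :=
      hTopfin.union (Set.finite_iUnion fun i => (side i).1)
    refine ⟨hbfin, ?_, ?_⟩
    · rw [← hTopcard]
      exact Set.ncard_le_ncard Set.subset_union_left hbfin
    · have h1 : (bdry d f h (n+1)).ncard ≤
          (DeltaTop d h (n+1)).ncard + (⋃ i, DeltaSide d f h i (n+1)).ncard :=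
        Set.ncard_union_le _ _
      have h2 : (⋃ i, DeltaSide d f h i (n+1)).ncard ≤
          ∑ i : Fin d, (DeltaSide d f h i (n+1)).ncard := by
        have := aux_ncard_biUnion_le (Finset.univ : Finset (Fin d))
          (fun i => DeltaSide d f h i (n+1))
        simpa using this
      have h3 : ∑ i : Fin d, (DeltaSide d f h i (n+1)).ncard ≤ d * P := by
        calc ∑ i : Fin d, (DeltaSide d f h i (n+1)).ncard
            ≤ ∑ _i : Fin d, P := Finset.sum_le_sum fun i _ => (side i).2
          _ = d * P := by simp [Finset.sum_const, Finset.card_univ]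
      calc (bdry d f h (n+1)).ncard
          ≤ (DeltaTop d h (n+1)).ncard + (⋃ i, DeltaSide d f h i (n+1)).ncard := h1
        _ ≤ P + d * P := by rw [hTopcard]; exact Nat.add_le_add_left (h2.trans h3) _
        _ = (d + 1) * P := by ring

end WedgePaper
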